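/- Let D be the square with vertices (±1,0) and (0,±1), and let T be the piecewise linear map equal to T_± = ((a, c_±),(0, b)) on the closed upper/lower halfplane respectively, with a ≠ 0, b > 0, c_± ∈ ℝ. Then (1/4)(‖T_+^{-1}‖²_HS + ‖T_-^{-1}‖²_HS) = [I₀/A³](T(D)) / [I₀/A³](D), where I₀(E) = ∫_E |x|² dx is the moment of inertia about the origin and A is area. -/

import Mathlib

open MeasureTheory Real Set

noncomputable section

/-- Area of a plane region. -/
def area (D : Set (Fin 2 → ℝ)) : ℝ := (volume D).toReal

/-- The square with vertices `(±1,0)` and `(0,±1)`. -/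
def diamondSquare : Set (Fin 2 → ℝ) := {x | |x 0| + |x 1| < 1}


lemma poly_int (u v c0 c1 c2 c3 : ℝ) :
    ∫ y in u..v, (c0 + c1*y + c2*y^2 + c3*y^3)
      = c0*(v-u) + c1*(v^2-u^2)/2 + c2*(v^3-u^3)/3 + c3*(v^4-u^4)/4 := by
  have h : ∀ y : ℝ, HasDerivAt (fun y => c0*y + c1*y^2/2 + c2*y^3/3 + c3*y^4/4)
      (c0 + c1*y + c2*y^2 + c3*y^3) y := by
    intro y
    have h1 : HasDerivAt (fun y : ℝ => c0*y) c0 y := by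
      simpa using (hasDerivAt_id y).const_mul c0
    have h2 : HasDerivAt (fun y : ℝ => c1*y^2/2) (c1*y) y := by
      have := ((hasDerivAt_pow 2 y).const_mul c1).div_const 2
      refine this.congr_deriv ?_; push_cast; ring
    have h3 : HasDerivAt (fun y : ℝ => c2*y^3/3) (c2*y^2) y := by
      have := ((hasDerivAt_pow 3 y).const_mul c2).div_const 3
      refine this.congr_deriv ?_; push_cast; ring
    have h4 : HasDerivAt (fun y : ℝ => c3*y^4/4) (c3*y^3) y := by
      have := ((hasDerivAt_pow 4 y).const_mul c3).div_const 4
      refine this.congr_deriv ?_; push_cast; ring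
    exact ((h1.add h2).add h3).add h4
  rw [intervalIntegral.integral_eq_sub_of_hasDerivAt (fun y _ => h y)
    (by apply Continuous.intervalIntegrable; fun_prop)]
  ring


lemma sliceUpper (F : ℝ → ℝ → ℝ) (hF : Continuous fun p : ℝ × ℝ => F p.1 p.2) :
    (∫ x in {x : Fin 2 → ℝ | |x 0| + |x 1| < 1 ∧ 0 ≤ x 1}, F (x 0) (x 1))
      = ∫ y in (0:ℝ)..1, ∫ x in (y-1)..(1-y), F x y := by
  set t : Set (ℝ × ℝ) := {p | |p.1| + |p.2| < 1 ∧ 0 ≤ p.2} with ht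
  have htm : MeasurableSet t := by
    have : t = {p : ℝ × ℝ | |p.1| + |p.2| < 1} ∩ {p : ℝ × ℝ | 0 ≤ p.2} := by
      ext p; simp [t, Set.mem_setOf_eq]
    rw [this]
    exact (measurableSet_lt (by fun_prop) measurable_const).inter
      (measurableSet_le measurable_const (by fun_prop))
  set e := MeasurableEquiv.piFinTwo (fun _ : Fin 2 => ℝ) with he
  have himg : ⇑e '' {x : Fin 2 → ℝ | |x 0| + |x 1| < 1 ∧ 0 ≤ x 1} = t := by
    rw [show ⇑e '' _ = ⇑e.symm ⁻¹' _ from Equiv.image_eq_preimage_symm _ _]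
    ext p
    simp [he, t, MeasurableEquiv.piFinTwo, Matrix.cons_val_zero, Matrix.cons_val_one]
  have key := (volume_preserving_piFinTwo (fun _ : Fin 2 => ℝ)).setIntegral_image_emb
    (MeasurableEquiv.measurableEmbedding _) (fun p => F p.1 p.2)
    {x : Fin 2 → ℝ | |x 0| + |x 1| < 1 ∧ 0 ≤ x 1}
  rw [himg] at key
  have key2 : (∫ x in {x : Fin 2 → ℝ | |x 0| + |x 1| < 1 ∧ 0 ≤ x 1}, F (x 0) (x 1))
      = ∫ p in t, F p.1 p.2 := by
    rw [key]; apply setIntegral_congr_fun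
    · have : {x : Fin 2 → ℝ | |x 0| + |x 1| < 1 ∧ 0 ≤ x 1}
          = {x : Fin 2 → ℝ | |x 0| + |x 1| < 1} ∩ {x : Fin 2 → ℝ | 0 ≤ x 1} := by
        ext x; simp [Set.mem_setOf_eq]
      rw [this]
      exact (measurableSet_lt (by fun_prop) measurable_const).inter
        (measurableSet_le measurable_const (by fun_prop))
    · intro x _; simp [he, MeasurableEquiv.piFinTwo]
  rw [key2, ← integral_indicator htm, Measure.volume_eq_prod]
  have hsub : t ⊆ Icc (-1:ℝ) 1 ×ˢ Icc (-1:ℝ) 1 := by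
    rintro ⟨x, y⟩ ⟨h1, h2⟩
    have hx := abs_nonneg x; have hy := abs_nonneg y
    have := le_abs_self x; have := neg_abs_le x
    have := le_abs_self y; have := neg_abs_le y
    constructor <;> constructor <;> simp only [] <;> linarith
  have hint : Integrable (t.indicator fun p : ℝ × ℝ => F p.1 p.2) (volume.prod volume) := by
    rw [← Measure.volume_eq_prod, integrable_indicator_iff htm]
    exact (hF.continuousOn.integrableOn_compact (isCompact_Icc.prod isCompact_Icc)).mono_set hsub
  rw [integral_prod_symm _ hint]
  have hin : ∀ y : ℝ, (∫ x : ℝ, t.indicator (fun p : ℝ × ℝ => F p.1 p.2) (x, y))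
      = (Set.Ico (0:ℝ) 1).indicator (fun y => ∫ x in (y-1)..(1-y), F x y) y := by
    intro y
    by_cases hy : 0 ≤ y ∧ y < 1
    · have h1 : ∀ x : ℝ, t.indicator (fun p : ℝ × ℝ => F p.1 p.2) (x, y)
          = (Set.Ioo (y-1) (1-y)).indicator (fun x => F x y) x := by
        intro x
        have hiff : ((x, y) ∈ t) ↔ x ∈ Set.Ioo (y-1) (1-y) := by
          simp only [t, Set.mem_setOf_eq, Set.mem_Ioo]
          constructor
          · rintro ⟨hlt, h0⟩
            rw [abs_of_nonneg h0] at hlt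
            have hax := abs_lt.mp (show |x| < 1 - y by linarith)
            exact ⟨by linarith [hax.1], by linarith [hax.2]⟩
          · rintro ⟨ha, hb⟩
            refine ⟨?_, hy.1⟩
            rw [abs_of_nonneg hy.1]
            have : |x| < 1 - y := abs_lt.mpr ⟨by linarith, by linarith⟩
            linarith
        simp only [Set.indicator_apply, hiff]
      simp only [h1]
      rw [integral_indicator measurableSet_Ioo, ← integral_Ioc_eq_integral_Ioo,
        ← intervalIntegral.integral_of_le (by linarith [hy.1, hy.2] : y - 1 ≤ 1 - y),
        Set.indicator_of_mem (Set.mem_Ico.mpr hy)]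
    · have h1 : ∀ x : ℝ, t.indicator (fun p : ℝ × ℝ => F p.1 p.2) (x, y) = 0 := by
        intro x
        apply Set.indicator_of_notMem
        rintro ⟨hlt, h0⟩
        exact hy ⟨h0, by nlinarith [abs_nonneg x, le_abs_self y]⟩
      simp only [h1, integral_zero]
      exact (Set.indicator_of_notMem (by simpa [Set.mem_Ico] using hy) _).symm
  simp only [hin]
  rw [integral_indicator measurableSet_Ico, integral_Ico_eq_integral_Ioo,
    ← integral_Ioc_eq_integral_Ioo, ← intervalIntegral.integral_of_le zero_le_one]


lemma sliceLower (F : ℝ → ℝ → ℝ) (hF : Continuous fun p : ℝ × ℝ => F p.1 p.2) :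
    (∫ x in {x : Fin 2 → ℝ | |x 0| + |x 1| < 1 ∧ x 1 < 0}, F (x 0) (x 1))
      = ∫ y in (-1:ℝ)..0, ∫ x in (-1-y)..(1+y), F x y := by
  set t : Set (ℝ × ℝ) := {p | |p.1| + |p.2| < 1 ∧ p.2 < 0} with ht
  have htm : MeasurableSet t := by
    have : t = {p : ℝ × ℝ | |p.1| + |p.2| < 1} ∩ {p : ℝ × ℝ | p.2 < 0} := by
      ext p; simp [t, Set.mem_setOf_eq]
    rw [this]
    exact (measurableSet_lt (by fun_prop) measurable_const).inter
      (measurableSet_lt (by fun_prop) measurable_const)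
  set e := MeasurableEquiv.piFinTwo (fun _ : Fin 2 => ℝ) with he
  have himg : ⇑e '' {x : Fin 2 → ℝ | |x 0| + |x 1| < 1 ∧ x 1 < 0} = t := by
    rw [show ⇑e '' _ = ⇑e.symm ⁻¹' _ from Equiv.image_eq_preimage_symm _ _]
    ext p
    simp [he, t, MeasurableEquiv.piFinTwo, Matrix.cons_val_zero, Matrix.cons_val_one]
  have key := (volume_preserving_piFinTwo (fun _ : Fin 2 => ℝ)).setIntegral_image_emb
    (MeasurableEquiv.measurableEmbedding _) (fun p => F p.1 p.2)
    {x : Fin 2 → ℝ | |x 0| + |x 1| < 1 ∧ x 1 < 0}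
  rw [himg] at key
  have key2 : (∫ x in {x : Fin 2 → ℝ | |x 0| + |x 1| < 1 ∧ x 1 < 0}, F (x 0) (x 1))
      = ∫ p in t, F p.1 p.2 := by
    rw [key]; apply setIntegral_congr_fun
    · have : {x : Fin 2 → ℝ | |x 0| + |x 1| < 1 ∧ x 1 < 0}
          = {x : Fin 2 → ℝ | |x 0| + |x 1| < 1} ∩ {x : Fin 2 → ℝ | x 1 < 0} := by
        ext x; simp [Set.mem_setOf_eq]
      rw [this]
      exact (measurableSet_lt (by fun_prop) measurable_const).inter
        (measurableSet_lt (by fun_prop) measurable_const)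
    · intro x _; simp [he, MeasurableEquiv.piFinTwo]
  rw [key2, ← integral_indicator htm, Measure.volume_eq_prod]
  have hsub : t ⊆ Icc (-1:ℝ) 1 ×ˢ Icc (-1:ℝ) 1 := by
    rintro ⟨x, y⟩ ⟨h1, h2⟩
    have hx := abs_nonneg x; have hy := abs_nonneg y
    have := le_abs_self x; have := neg_abs_le x
    have := le_abs_self y; have := neg_abs_le y
    constructor <;> constructor <;> simp only [] <;> linarith
  have hint : Integrable (t.indicator fun p : ℝ × ℝ => F p.1 p.2) (volume.prod volume) := by
    rw [← Measure.volume_eq_prod, integrable_indicator_iff htm]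
    exact (hF.continuousOn.integrableOn_compact (isCompact_Icc.prod isCompact_Icc)).mono_set hsub
  rw [integral_prod_symm _ hint]
  have hin : ∀ y : ℝ, (∫ x : ℝ, t.indicator (fun p : ℝ × ℝ => F p.1 p.2) (x, y))
      = (Set.Ioo (-1:ℝ) 0).indicator (fun y => ∫ x in (-1-y)..(1+y), F x y) y := by
    intro y
    by_cases hy : -1 < y ∧ y < 0
    · have h1 : ∀ x : ℝ, t.indicator (fun p : ℝ × ℝ => F p.1 p.2) (x, y)
          = (Set.Ioo (-1-y) (1+y)).indicator (fun x => F x y) x := by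
        intro x
        have hiff : ((x, y) ∈ t) ↔ x ∈ Set.Ioo (-1-y) (1+y) := by
          simp only [t, Set.mem_setOf_eq, Set.mem_Ioo]
          constructor
          · rintro ⟨hlt, h0⟩
            rw [abs_of_neg h0] at hlt
            have hax := abs_lt.mp (show |x| < 1 + y by linarith)
            exact ⟨by linarith [hax.1], by linarith [hax.2]⟩
          · rintro ⟨ha, hb⟩
            refine ⟨?_, hy.2⟩
            rw [abs_of_neg hy.2]
            have : |x| < 1 + y := abs_lt.mpr ⟨by linarith, by linarith⟩
            linarith
        simp only [Set.indicator_apply, hiff]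
      simp only [h1]
      rw [integral_indicator measurableSet_Ioo, ← integral_Ioc_eq_integral_Ioo,
        ← intervalIntegral.integral_of_le (by linarith [hy.1, hy.2] : -1 - y ≤ 1 + y),
        Set.indicator_of_mem (Set.mem_Ioo.mpr hy)]
    · have h1 : ∀ x : ℝ, t.indicator (fun p : ℝ × ℝ => F p.1 p.2) (x, y) = 0 := by
        intro x
        apply Set.indicator_of_notMem
        rintro ⟨hlt, h0⟩
        exact hy ⟨by nlinarith [abs_nonneg x, neg_abs_le y], h0⟩
      simp only [h1, integral_zero]
      exact (Set.indicator_of_notMem (by simpa [Set.mem_Ioo] using hy) _).symm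
  simp only [hin]
  rw [integral_indicator measurableSet_Ioo, ← integral_Ioc_eq_integral_Ioo,
    ← intervalIntegral.integral_of_le (by norm_num : (-1:ℝ) ≤ 0)]

lemma upper_quad (A B C : ℝ) :
    (∫ x in {x : Fin 2 → ℝ | |x 0| + |x 1| < 1 ∧ 0 ≤ x 1},
      (A * x 0 ^ 2 + B * (x 0 * x 1) + C * x 1 ^ 2)) = (A + C) / 6 := by
  have h := sliceUpper (fun u v => A * u ^ 2 + B * (u * v) + C * v ^ 2) (by fun_prop)
  rw [h]
  have hinner : ∀ y : ℝ, (∫ x in (y-1)..(1-y), (A * x ^ 2 + B * (x * y) + C * y ^ 2))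
      = 2*A/3 + (-2*A)*y + (2*A+2*C)*y^2 + (-2*A/3-2*C)*y^3 := by
    intro y
    rw [intervalIntegral.integral_congr
      (g := fun x => (C*y^2) + (B*y)*x + A*x^2 + 0*x^3) (fun x _ => by ring), poly_int]
    ring
  rw [intervalIntegral.integral_congr (g := fun y =>
    2*A/3 + (-2*A)*y + (2*A+2*C)*y^2 + (-2*A/3-2*C)*y^3) (fun y _ => hinner y), poly_int]
  ring

lemma lower_quad (A B C : ℝ) :
    (∫ x in {x : Fin 2 → ℝ | |x 0| + |x 1| < 1 ∧ x 1 < 0},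
      (A * x 0 ^ 2 + B * (x 0 * x 1) + C * x 1 ^ 2)) = (A + C) / 6 := by
  have h := sliceLower (fun u v => A * u ^ 2 + B * (u * v) + C * v ^ 2) (by fun_prop)
  rw [h]
  have hinner : ∀ y : ℝ, (∫ x in (-1-y)..(1+y), (A * x ^ 2 + B * (x * y) + C * y ^ 2))
      = 2*A/3 + (2*A)*y + (2*A+2*C)*y^2 + (2*A/3+2*C)*y^3 := by
    intro y
    rw [intervalIntegral.integral_congr
      (g := fun x => (C*y^2) + (B*y)*x + A*x^2 + 0*x^3) (fun x _ => by ring), poly_int]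
    ring
  rw [intervalIntegral.integral_congr (g := fun y =>
    2*A/3 + (2*A)*y + (2*A+2*C)*y^2 + (2*A/3+2*C)*y^3) (fun y _ => hinner y), poly_int]
  ring

lemma upper_one :
    (∫ _x in {x : Fin 2 → ℝ | |x 0| + |x 1| < 1 ∧ 0 ≤ x 1}, (1:ℝ)) = 1 := by
  have h := sliceUpper (fun _ _ => (1:ℝ)) (by fun_prop)
  rw [h]
  have hinner : ∀ y : ℝ, (∫ _x in (y-1)..(1-y), (1:ℝ))
      = 2 + (-2)*y + 0*y^2 + 0*y^3 := by
    intro y; rw [intervalIntegral.integral_const]; simp; ring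
  rw [intervalIntegral.integral_congr (g := fun y =>
    2 + (-2)*y + 0*y^2 + 0*y^3) (fun y _ => hinner y), poly_int]
  ring

lemma lower_one :
    (∫ _x in {x : Fin 2 → ℝ | |x 0| + |x 1| < 1 ∧ x 1 < 0}, (1:ℝ)) = 1 := by
  have h := sliceLower (fun _ _ => (1:ℝ)) (by fun_prop)
  rw [h]
  have hinner : ∀ y : ℝ, (∫ _x in (-1-y)..(1+y), (1:ℝ))
      = 2 + 2*y + 0*y^2 + 0*y^3 := by
    intro y; rw [intervalIntegral.integral_const]; simp; ring
  rw [intervalIntegral.integral_congr (g := fun y =>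
    2 + 2*y + 0*y^2 + 0*y^3) (fun y _ => hinner y), poly_int]
  ring


lemma mulVec_coe (M : Matrix (Fin 2) (Fin 2) ℝ) :
    ⇑(LinearMap.toContinuousLinearMap (Matrix.toLin' M)) = M.mulVec := by
  funext x
  simp [Matrix.toLin'_apply]

lemma mulVec_injOn (M : Matrix (Fin 2) (Fin 2) ℝ) (hM : M.det ≠ 0)
    (s : Set (Fin 2 → ℝ)) : Set.InjOn M.mulVec s := by
  intro x _ y _ h
  have := congrArg M⁻¹.mulVec h
  simpa only [Matrix.mulVec_mulVec, Matrix.nonsing_inv_mul M (isUnit_iff_ne_zero.2 hM),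
    Matrix.one_mulVec] using this

lemma cov2 (M : Matrix (Fin 2) (Fin 2) ℝ) (hM : M.det ≠ 0) {s : Set (Fin 2 → ℝ)}
    (hs : MeasurableSet s) (g : (Fin 2 → ℝ) → ℝ) :
    ∫ x in M.mulVec '' s, g x = ∫ x in s, |M.det| * g (M.mulVec x) := by
  set L := LinearMap.toContinuousLinearMap (Matrix.toLin' M) with hL
  have hdet : L.det = M.det := by
    rw [ContinuousLinearMap.det, hL, LinearMap.coe_toContinuousLinearMap,
      LinearMap.det_toLin']
  have h := integral_image_eq_integral_abs_det_fderiv_smul volume hs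
    (f' := fun _ => L) (f := M.mulVec)
    (fun x _ => by rw [← mulVec_coe M]; exact L.hasFDerivAt.hasFDerivWithinAt)
    (mulVec_injOn M hM s) g
  rw [h]
  apply setIntegral_congr_fun hs
  intro x _
  simp [hdet, smul_eq_mul]

lemma vol2 (M : Matrix (Fin 2) (Fin 2) ℝ) (s : Set (Fin 2 → ℝ)) :
    volume (M.mulVec '' s) = ENNReal.ofReal |M.det| * volume s := by
  have h := Measure.addHaar_image_linearMap volume (Matrix.toLin' M) s
  have hc : ⇑(Matrix.toLin' M) = M.mulVec := funext fun x => Matrix.toLin'_apply M x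
  rw [hc] at h
  rw [h, LinearMap.det_toLin']

lemma img_eq (M : Matrix (Fin 2) (Fin 2) ℝ) (hM : M.det ≠ 0) (s : Set (Fin 2 → ℝ)) :
    M.mulVec '' s = M⁻¹.mulVec ⁻¹' s := by
  have hu : IsUnit M.det := isUnit_iff_ne_zero.2 hM
  ext y
  constructor
  · rintro ⟨x, hx, rfl⟩
    simpa only [Set.mem_preimage, Matrix.mulVec_mulVec, Matrix.nonsing_inv_mul M hu, Matrix.one_mulVec] using hx
  · intro hy
    exact ⟨M⁻¹.mulVec y, hy,
      by simp only [Matrix.mulVec_mulVec, Matrix.mul_nonsing_inv M hu, Matrix.one_mulVec]⟩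

lemma mulVec_continuous (M : Matrix (Fin 2) (Fin 2) ℝ) : Continuous M.mulVec := by
  rw [← mulVec_coe M]
  exact (LinearMap.toContinuousLinearMap (Matrix.toLin' M)).continuous

lemma img_measurable (M : Matrix (Fin 2) (Fin 2) ℝ) (hM : M.det ≠ 0)
    {s : Set (Fin 2 → ℝ)} (hs : MeasurableSet s) : MeasurableSet (M.mulVec '' s) := by
  rw [img_eq M hM]
  exact hs.preimage (mulVec_continuous M⁻¹).measurable

lemma img_bounded (M : Matrix (Fin 2) (Fin 2) ℝ) {s : Set (Fin 2 → ℝ)}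
    (hs : Bornology.IsBounded s) : Bornology.IsBounded (M.mulVec '' s) := by
  rw [← mulVec_coe M]
  exact (LinearMap.toContinuousLinearMap (Matrix.toLin' M)).lipschitz.isBounded_image hs

lemma intOn {s : Set (Fin 2 → ℝ)} (hb : Bornology.IsBounded s) :
    IntegrableOn (fun x : Fin 2 → ℝ => x 0 ^ 2 + x 1 ^ 2) s := by
  obtain ⟨R, hR⟩ := hb.subset_closedBall (0 : Fin 2 → ℝ)
  have hc : Continuous (fun x : Fin 2 → ℝ => x 0 ^ 2 + x 1 ^ 2) := by fun_prop
  exact (hc.continuousOn.integrableOn_compact (isCompact_closedBall _ _)).mono_set hR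

/-- For the piecewise linear map `T` equal to `T₊ = ((a,c₊),(0,b))` on the upper
halfplane and `T₋ = ((a,c₋),(0,b))` on the lower halfplane (`a ≠ 0`, `b > 0`), and `D`
the square with vertices `(±1,0),(0,±1)`:
`(1/4)(‖T₊⁻¹‖²_HS + ‖T₋⁻¹‖²_HS) = [I₀/A³](T(D)) / [I₀/A³](D)`,
where `I₀(E) = ∫_E |x|² dx`. -/
theorem piecewise_linear_hs_inertia (a b cp cm : ℝ) (ha : a ≠ 0) (hb : 0 < b) :
    let Tp : Matrix (Fin 2) (Fin 2) ℝ := !![a, cp; 0, b]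
    let Tm : Matrix (Fin 2) (Fin 2) ℝ := !![a, cm; 0, b]
    let Tmap : (Fin 2 → ℝ) → (Fin 2 → ℝ) :=
      fun x => if 0 ≤ x 1 then Tp.mulVec x else Tm.mulVec x
    (1 / 4) * ((∑ i : Fin 2, ∑ j : Fin 2, (Tp⁻¹ i j) ^ 2)
        + (∑ i : Fin 2, ∑ j : Fin 2, (Tm⁻¹ i j) ^ 2))
      = ((∫ x in Tmap '' diamondSquare, (x 0 ^ 2 + x 1 ^ 2))
            / area (Tmap '' diamondSquare) ^ 3)
        / ((∫ x in diamondSquare, (x 0 ^ 2 + x 1 ^ 2)) / area diamondSquare ^ 3) := by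
  intro Tp Tm Tmap
  set s_up : Set (Fin 2 → ℝ) := {x | |x 0| + |x 1| < 1 ∧ 0 ≤ x 1} with hs_up_def
  set s_lo : Set (Fin 2 → ℝ) := {x | |x 0| + |x 1| < 1 ∧ x 1 < 0} with hs_lo_def
  have hdetp : Tp.det = a * b := by simp [Tp, Matrix.det_fin_two_of]
  have hdetm : Tm.det = a * b := by simp [Tm, Matrix.det_fin_two_of]
  have hab : a * b ≠ 0 := mul_ne_zero ha hb.ne'
  have hdetp' : Tp.det ≠ 0 := by rw [hdetp]; exact hab
  have hdetm' : Tm.det ≠ 0 := by rw [hdetm]; exact hab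
  have hs_up : MeasurableSet s_up := by
    have : s_up = {x : Fin 2 → ℝ | |x 0| + |x 1| < 1} ∩ {x : Fin 2 → ℝ | 0 ≤ x 1} := by
      ext x; simp [hs_up_def, Set.mem_setOf_eq]
    rw [this]
    exact (measurableSet_lt (by fun_prop) measurable_const).inter
      (measurableSet_le measurable_const (by fun_prop))
  have hs_lo : MeasurableSet s_lo := by
    have : s_lo = {x : Fin 2 → ℝ | |x 0| + |x 1| < 1} ∩ {x : Fin 2 → ℝ | x 1 < 0} := by
      ext x; simp [hs_lo_def, Set.mem_setOf_eq]
    rw [this]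
    exact (measurableSet_lt (by fun_prop) measurable_const).inter
      (measurableSet_lt (by fun_prop) measurable_const)
  have hball : ∀ x : Fin 2 → ℝ, |x 0| + |x 1| < 1 → x ∈ Metric.closedBall (0 : Fin 2 → ℝ) 1 := by
    intro x hx
    rw [Metric.mem_closedBall, dist_zero_right]
    rw [pi_norm_le_iff_of_nonneg zero_le_one]
    refine Fin.forall_fin_two.mpr ⟨?_, ?_⟩ <;> rw [Real.norm_eq_abs] <;>
      [linarith [abs_nonneg (x 1)]; linarith [abs_nonneg (x 0)]]
  have hb_up : Bornology.IsBounded s_up :=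
    (Metric.isBounded_closedBall (x := (0 : Fin 2 → ℝ)) (r := 1)).subset
      (fun x hx => hball x hx.1)
  have hb_lo : Bornology.IsBounded s_lo :=
    (Metric.isBounded_closedBall (x := (0 : Fin 2 → ℝ)) (r := 1)).subset
      (fun x hx => hball x hx.1)
  -- mulVec components
  have hp0 : ∀ x : Fin 2 → ℝ, Tp.mulVec x 0 = a * x 0 + cp * x 1 := by
    intro x; simp [Tp, Matrix.mulVec, dotProduct, Fin.sum_univ_two]
  have hp1 : ∀ x : Fin 2 → ℝ, Tp.mulVec x 1 = b * x 1 := by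
    intro x; simp [Tp, Matrix.mulVec, dotProduct, Fin.sum_univ_two]
  have hm0 : ∀ x : Fin 2 → ℝ, Tm.mulVec x 0 = a * x 0 + cm * x 1 := by
    intro x; simp [Tm, Matrix.mulVec, dotProduct, Fin.sum_univ_two]
  have hm1 : ∀ x : Fin 2 → ℝ, Tm.mulVec x 1 = b * x 1 := by
    intro x; simp [Tm, Matrix.mulVec, dotProduct, Fin.sum_univ_two]
  -- decomposition of diamond
  have hDunion : diamondSquare = s_up ∪ s_lo := by
    ext x
    simp only [diamondSquare, Set.mem_setOf_eq, Set.mem_union, hs_up_def, hs_lo_def]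
    constructor
    · intro h; rcases le_or_gt 0 (x 1) with h1 | h1
      · exact Or.inl ⟨h, h1⟩
      · exact Or.inr ⟨h, h1⟩
    · rintro (⟨h, _⟩ | ⟨h, _⟩) <;> exact h
  have himgD : Tmap '' diamondSquare = Tp.mulVec '' s_up ∪ Tm.mulVec '' s_lo := by
    rw [hDunion, Set.image_union]
    congr 1
    · exact Set.image_congr fun x hx => if_pos hx.2
    · exact Set.image_congr fun x hx => if_neg (not_le.2 hx.2)
  have hdisj : Disjoint s_up s_lo := by
    rw [Set.disjoint_left]
    rintro x ⟨_, h1⟩ ⟨_, h2⟩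
    linarith
  have hdisj_img : Disjoint (Tp.mulVec '' s_up) (Tm.mulVec '' s_lo) := by
    rw [Set.disjoint_left]
    rintro y ⟨x, hx, rfl⟩ ⟨z, hz, hzy⟩
    have h1 : 0 ≤ Tp.mulVec x 1 := by rw [hp1]; exact mul_nonneg hb.le hx.2
    have h2 : Tm.mulVec z 1 < 0 := by rw [hm1]; exact mul_neg_of_pos_of_neg hb hz.2
    rw [hzy] at h2
    linarith
  -- integrals over halves of the diamond
  have hIDup : (∫ x in s_up, (x 0 ^ 2 + x 1 ^ 2)) = 1 / 3 := by
    have h := upper_quad 1 0 1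
    rw [setIntegral_congr_fun hs_up (g := fun x : Fin 2 → ℝ =>
      (1:ℝ) * x 0 ^ 2 + 0 * (x 0 * x 1) + 1 * x 1 ^ 2) (fun x _ => by ring)]
    rw [h]; norm_num
  have hIDlo : (∫ x in s_lo, (x 0 ^ 2 + x 1 ^ 2)) = 1 / 3 := by
    have h := lower_quad 1 0 1
    rw [setIntegral_congr_fun hs_lo (g := fun x : Fin 2 → ℝ =>
      (1:ℝ) * x 0 ^ 2 + 0 * (x 0 * x 1) + 1 * x 1 ^ 2) (fun x _ => by ring)]
    rw [h]; norm_num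
  -- image integrals
  have hIup : (∫ x in Tp.mulVec '' s_up, (x 0 ^ 2 + x 1 ^ 2))
      = |a * b| * ((a ^ 2 + (cp ^ 2 + b ^ 2)) / 6) := by
    rw [cov2 Tp hdetp' hs_up]
    rw [setIntegral_congr_fun hs_up (g := fun x : Fin 2 → ℝ =>
      |a * b| * (a ^ 2 * x 0 ^ 2 + (2 * a * cp) * (x 0 * x 1) + (cp ^ 2 + b ^ 2) * x 1 ^ 2))
      (fun x _ => by rw [hdetp, hp0, hp1]; ring)]
    rw [integral_const_mul, upper_quad]
  have hIlo : (∫ x in Tm.mulVec '' s_lo, (x 0 ^ 2 + x 1 ^ 2))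
      = |a * b| * ((a ^ 2 + (cm ^ 2 + b ^ 2)) / 6) := by
    rw [cov2 Tm hdetm' hs_lo]
    rw [setIntegral_congr_fun hs_lo (g := fun x : Fin 2 → ℝ =>
      |a * b| * (a ^ 2 * x 0 ^ 2 + (2 * a * cm) * (x 0 * x 1) + (cm ^ 2 + b ^ 2) * x 1 ^ 2))
      (fun x _ => by rw [hdetm, hm0, hm1]; ring)]
    rw [integral_const_mul, lower_quad]
  -- volumes
  have hvol_up : volume s_up = 1 := by
    have h1 := upper_one
    rw [setIntegral_const, smul_eq_mul, mul_one] at h1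
    exact (ENNReal.toReal_eq_one_iff _).mp h1
  have hvol_lo : volume s_lo = 1 := by
    have h1 := lower_one
    rw [setIntegral_const, smul_eq_mul, mul_one] at h1
    exact (ENNReal.toReal_eq_one_iff _).mp h1
  have hvol_imgp : volume (Tp.mulVec '' s_up) = ENNReal.ofReal |a * b| := by
    rw [vol2, hdetp, hvol_up, mul_one]
  have hvol_imgm : volume (Tm.mulVec '' s_lo) = ENNReal.ofReal |a * b| := by
    rw [vol2, hdetm, hvol_lo, mul_one]
  -- areas
  have harea_img : area (Tmap '' diamondSquare) = 2 * |a * b| := by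
    rw [area, himgD, measure_union hdisj_img (img_measurable Tm hdetm' hs_lo),
      hvol_imgp, hvol_imgm, ← ENNReal.ofReal_add (abs_nonneg _) (abs_nonneg _),
      ENNReal.toReal_ofReal (by positivity)]
    ring
  have harea_D : area diamondSquare = 2 := by
    rw [area, hDunion, measure_union hdisj hs_lo, hvol_up, hvol_lo]
    norm_num
  -- total integrals
  have hI_img : (∫ x in Tmap '' diamondSquare, (x 0 ^ 2 + x 1 ^ 2))
      = |a * b| * ((a ^ 2 + (cp ^ 2 + b ^ 2)) / 6)
        + |a * b| * ((a ^ 2 + (cm ^ 2 + b ^ 2)) / 6) := by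
    rw [himgD, setIntegral_union hdisj_img (img_measurable Tm hdetm' hs_lo)
      (intOn (img_bounded Tp hb_up)) (intOn (img_bounded Tm hb_lo)), hIup, hIlo]
  have hI_D : (∫ x in diamondSquare, (x 0 ^ 2 + x 1 ^ 2)) = 2 / 3 := by
    rw [hDunion, setIntegral_union hdisj hs_lo (intOn hb_up) (intOn hb_lo),
      hIDup, hIDlo]
    norm_num
  -- inverse matrices
  have hinvp : (∑ i : Fin 2, ∑ j : Fin 2, (Tp⁻¹ i j) ^ 2)
      = (a ^ 2 + b ^ 2 + cp ^ 2) / (a * b) ^ 2 := by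
    rw [Matrix.inv_def, Matrix.adjugate_fin_two, hdetp]
    simp only [Fin.sum_univ_two, Matrix.smul_apply, Matrix.cons_val', Matrix.cons_val_zero,
      Matrix.cons_val_one, Matrix.head_cons, Matrix.head_fin_const, Matrix.empty_val',
      Matrix.cons_val_fin_one, smul_eq_mul, Ring.inverse_eq_inv']
    show ((a*b)⁻¹ * Tp 1 1)^2 + ((a*b)⁻¹ * -Tp 0 1)^2 + (((a*b)⁻¹ * -Tp 1 0)^2 + ((a*b)⁻¹ * Tp 0 0)^2) = _
    have h00 : Tp 0 0 = a := rfl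
    have h01 : Tp 0 1 = cp := rfl
    have h10 : Tp 1 0 = 0 := rfl
    have h11 : Tp 1 1 = b := rfl
    rw [h00, h01, h10, h11]
    field_simp
    ring
  have hinvm : (∑ i : Fin 2, ∑ j : Fin 2, (Tm⁻¹ i j) ^ 2)
      = (a ^ 2 + b ^ 2 + cm ^ 2) / (a * b) ^ 2 := by
    rw [Matrix.inv_def, Matrix.adjugate_fin_two, hdetm]
    simp only [Fin.sum_univ_two, Matrix.smul_apply, Matrix.cons_val', Matrix.cons_val_zero,
      Matrix.cons_val_one, Matrix.head_cons, Matrix.head_fin_const, Matrix.empty_val',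
      Matrix.cons_val_fin_one, smul_eq_mul, Ring.inverse_eq_inv']
    show ((a*b)⁻¹ * Tm 1 1)^2 + ((a*b)⁻¹ * -Tm 0 1)^2 + (((a*b)⁻¹ * -Tm 1 0)^2 + ((a*b)⁻¹ * Tm 0 0)^2) = _
    have h00 : Tm 0 0 = a := rfl
    have h01 : Tm 0 1 = cm := rfl
    have h10 : Tm 1 0 = 0 := rfl
    have h11 : Tm 1 1 = b := rfl
    rw [h00, h01, h10, h11]
    field_simp
    ring
  -- final arithmetic
  rw [hinvp, hinvm, hI_img, hI_D, harea_img, harea_D]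
  have hk : (0:ℝ) < |a * b| := abs_pos.mpr hab
  have hk2 : |a * b| ^ 2 = (a * b) ^ 2 := sq_abs _
  have hcube : (2 * |a * b|) ^ 3 = 8 * (a * b) ^ 2 * |a * b| := by
    rw [show (2 * |a * b|) ^ 3 = 8 * |a * b| ^ 2 * |a * b| by ring, hk2]
  rw [hcube]
  field_simp
  ring
end
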